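/- Let β > 1 and let i_1 … i_n be a finite word in S_β^* such that i_1 … i_n j_1 … j_m ∈ S_β^* for every finite word j_1 … j_m ∈ S_β^*. Then |π_β([i_1 … i_n])| = β^{−n}, and moreover |π_β([i_1 … i_n j_1 … j_m])| = β^{−n} · |π_β([j_1 … j_m])| for every finite word j_1 … j_m ∈ S_β^*. -/

import Mathlib

open Set MeasureTheory Filter Topology

noncomputable section

/-- The β-transformation `x ↦ βx mod 1`. -/
def fbeta (β : ℝ) (x : ℝ) : ℝ := Int.fract (β * x)

/-- The digit sequence `d(x, β)`, given by `d(x,β)_n = [β f_β^n(x)]`. -/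
def bdigit (β x : ℝ) (n : ℕ) : ℕ := (⌊β * (fbeta β)^[n] x⌋).toNat

/-- The β-shift `S_β`: the closure (product topology) of the set of digit sequences of
points of `[0,1)`. -/
def betaShift (β : ℝ) : Set (ℕ → ℕ) :=
  closure {d | ∃ x ∈ Set.Ico (0 : ℝ) 1, d = bdigit β x}

/-- `π_β ((i_k)) = ∑ i_k β^{-(k+1)}`. -/
def piBeta (β : ℝ) (d : ℕ → ℕ) : ℝ := ∑' k : ℕ, (d k : ℝ) / β ^ (k + 1)

/-- The finite word `w` occurs in the sequence `d` at position `m`. -/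
def occursAt (w : List ℕ) (d : ℕ → ℕ) (m : ℕ) : Prop :=
  ∀ i < w.length, d (m + i) = w.getD i 0

/-- The finite word `w` occurs somewhere in the sequence `d`. -/
def occursIn (w : List ℕ) (d : ℕ → ℕ) : Prop := ∃ m, occursAt w d m

/-- `w ∈ S_β^*`: the finite word `w` occurs in some sequence of `S_β`. -/
def wordIn (β : ℝ) (w : List ℕ) : Prop := ∃ d ∈ betaShift β, occursIn w d

/-- The finite word `w` occurs in some sequence of the set `S`. -/
def wordInSet (S : Set (ℕ → ℕ)) (w : List ℕ) : Prop := ∃ d ∈ S, occursIn w d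

/-- The cylinder `[w]` in `S_β`. -/
def cylinder (β : ℝ) (w : List ℕ) : Set (ℕ → ℕ) :=
  {d ∈ betaShift β | ∀ i < w.length, d i = w.getD i 0}

/-- A subshift of finite type inside `S_β`: the subset of `S_β` determined by a finite
set of forbidden words. -/
def IsSFTin (β : ℝ) (S : Set (ℕ → ℕ)) : Prop :=
  ∃ F : Finset (List ℕ), S = {d ∈ betaShift β | ∀ w ∈ F, ¬ occursIn w d}

/-- `S_β` is a subshift of finite type iff `d(1,β)` has only finitely many nonzero digits. -/
def betaShiftFiniteType (β : ℝ) : Prop := ∃ N, ∀ n ≥ N, bdigit β 1 n = 0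

/-- The length (Lebesgue measure) of a set of reals. -/
def len (I : Set ℝ) : ℝ := (volume I).toReal

/-- `I` is a (possibly degenerate) closed interval. -/
def IsClosedInterval (I : Set ℝ) : Prop := ∃ a b : ℝ, a ≤ b ∧ I = Set.Icc a b

/-- A legal move in Schmidt's game with ratio `ρ`: a closed subinterval `cur` of `prev`
with `|cur| ≥ ρ|prev|`. -/
def MoveLegal (ρ : ℝ) (prev cur : Set ℝ) : Prop :=
  IsClosedInterval cur ∧ cur ⊆ prev ∧ ρ * len prev ≤ len cur

/-- White has a winning strategy in Schmidt's `(α,γ)`-game on `[0,1]` with target set `E`: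
there is a strategy (a function from the history of Black's moves to White's next move)
such that, for every sequence of moves of Black starting with a closed interval
`B 0 ⊆ [0,1]`, White's moves are legal as long as Black's have been, and if Black always
moves legally then `⋂ k, W k ⊆ E`. -/
def WinsSchmidt (α γ : ℝ) (E : Set ℝ) : Prop :=
  ∃ strat : List (Set ℝ) → Set ℝ,
    ∀ B : ℕ → Set ℝ,
      (IsClosedInterval (B 0) ∧ B 0 ⊆ Set.Icc (0 : ℝ) 1) →
      (∀ n : ℕ,
        (∀ k < n, MoveLegal γ (strat (List.ofFn fun i : Fin (k + 1) => B i)) (B (k + 1))) →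
        MoveLegal α (B n) (strat (List.ofFn fun i : Fin (n + 1) => B i))) ∧
      ((∀ k : ℕ, MoveLegal γ (strat (List.ofFn fun i : Fin (k + 1) => B i)) (B (k + 1))) →
        (⋂ k : ℕ, strat (List.ofFn fun i : Fin (k + 1) => B i)) ⊆ E)

/-- `E` is `α`-winning: it is `(α,γ)`-winning for every `γ ∈ (0,1)`. -/
def AlphaWinning (α : ℝ) (E : Set ℝ) : Prop :=
  ∀ γ ∈ Set.Ioo (0 : ℝ) 1, WinsSchmidt α γ E

/-- A similarity transformation of `ℝ`. -/
def IsSimilarityMap (f : ℝ → ℝ) : Prop := ∃ a b : ℝ, a ≠ 0 ∧ ∀ x, f x = a * x + b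

/-- Falconer's class `𝒢^s`: `G_δ` sets `F` with `dim_H (⋂ i, f_i(F)) ≥ s` for every
sequence of similarity transformations `(f_i)`. -/
def FalconerClass (s : ℝ) (F : Set ℝ) : Prop :=
  IsGδ F ∧ ∀ f : ℕ → ℝ → ℝ, (∀ i, IsSimilarityMap (f i)) →
    ENNReal.ofReal s ≤ dimH (⋂ i, f i '' F)

/-- The suffix of `u` of length `m+1` coincides with the first `m+1` digits of `d(1,β)`. -/
def tailMatch (β : ℝ) (u : List ℕ) (m : ℕ) : Prop :=
  m < u.length ∧ ∀ t ≤ m, u.getD (u.length - 1 - m + t) 0 = bdigit β 1 t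
namespace BetaAux

/-- prefix of a sequence as a list -/
def pre (e : ℕ → ℕ) (k : ℕ) : List ℕ := List.ofFn fun i : Fin k => e i

lemma pre_length (e : ℕ → ℕ) (k : ℕ) : (pre e k).length = k := by simp [pre]

lemma pre_getD (e : ℕ → ℕ) {k i : ℕ} (h : i < k) : (pre e k).getD i 0 = e i := by
  rw [List.getD_eq_getElem _ _ (by simpa [pre] using h)]
  simp [pre]

lemma fbeta_mem (β x : ℝ) : fbeta β x ∈ Set.Ico (0:ℝ) 1 :=
  ⟨Int.fract_nonneg _, Int.fract_lt_one _⟩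

lemma iter_mem {β x : ℝ} (hx : x ∈ Set.Ico (0:ℝ) 1) (n : ℕ) :
    (fbeta β)^[n] x ∈ Set.Ico (0:ℝ) 1 := by
  cases n with
  | zero => simpa using hx
  | succ n => rw [Function.iterate_succ_apply']; exact fbeta_mem _ _

lemma bdigit_le {β x : ℝ} (hβ : 1 < β) (hx : x ∈ Set.Ico (0:ℝ) 1) (n : ℕ) :
    bdigit β x n ≤ ⌊β⌋₊ := by
  have hy := iter_mem (β := β) hx n
  set y := (fbeta β)^[n] x with hydef
  have hβ0 : (0:ℝ) < β := lt_trans one_pos hβ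
  have h0 : 0 ≤ β * y := mul_nonneg hβ0.le hy.1
  have hcast : ((⌊β * y⌋.toNat : ℕ) : ℝ) = (⌊β * y⌋ : ℝ) := by
    exact_mod_cast congrArg (Int.cast : ℤ → ℝ) (Int.toNat_of_nonneg (Int.floor_nonneg.2 h0))
  apply Nat.le_floor
  rw [bdigit, hcast]
  calc (⌊β * y⌋ : ℝ) ≤ β * y := Int.floor_le _
    _ ≤ β * 1 := mul_le_mul_of_nonneg_left hy.2.le hβ0.le
    _ = β := mul_one β

lemma mem_le {β : ℝ} (hβ : 1 < β) {d : ℕ → ℕ} (hd : d ∈ betaShift β) (n : ℕ) :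
    d n ≤ ⌊β⌋₊ := by
  have hcl : IsClosed {d : ℕ → ℕ | ∀ n, d n ≤ ⌊β⌋₊} := by
    have : {d : ℕ → ℕ | ∀ n, d n ≤ ⌊β⌋₊} = ⋂ n, (fun d : ℕ → ℕ => d n) ⁻¹' {k | k ≤ ⌊β⌋₊} := by
      ext d; simp
    rw [this]
    exact isClosed_iInter fun n => (isClosed_discrete _).preimage (continuous_apply n)
  have hsub : betaShift β ⊆ {d : ℕ → ℕ | ∀ n, d n ≤ ⌊β⌋₊} := by
    apply closure_minimal _ hcl
    rintro d ⟨x, hx, rfl⟩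
    exact fun n => bdigit_le hβ hx n
  exact hsub hd n

lemma summable_term {β : ℝ} (hβ : 1 < β) {d : ℕ → ℕ} (hd : ∀ n, d n ≤ ⌊β⌋₊) :
    Summable (fun k => (d k : ℝ) / β ^ (k+1)) := by
  have hβ0 : (0:ℝ) < β := lt_trans one_pos hβ
  have hg : Summable (fun k : ℕ => ((⌊β⌋₊ : ℝ) / β) * (β⁻¹) ^ k) :=
    (summable_geometric_of_lt_one (by positivity) (inv_lt_one_of_one_lt₀ hβ)).mul_left _
  apply Summable.of_nonneg_of_le (fun k => by positivity) _ hg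
  intro k
  have h1 : (d k : ℝ) ≤ (⌊β⌋₊ : ℝ) := by exact_mod_cast hd k
  have h2 : ((⌊β⌋₊ : ℝ) / β) * (β⁻¹) ^ k = (⌊β⌋₊ : ℝ) / β ^ (k+1) := by
    have hb : (β:ℝ) ≠ 0 := by positivity
    have hbk : (β:ℝ)^k ≠ 0 := by positivity
    rw [inv_pow, pow_succ]
    field_simp
  rw [h2]
  exact div_le_div_of_nonneg_right h1 (by positivity)


lemma partial_eq {β x : ℝ} (hβ : 1 < β) (hx : x ∈ Set.Ico (0:ℝ) 1) (n : ℕ) :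
    ∑ k ∈ Finset.range n, (bdigit β x k : ℝ) / β ^ (k+1)
      = x - (fbeta β)^[n] x / β ^ n := by
  have hβ0 : (0:ℝ) < β := lt_trans one_pos hβ
  induction n with
  | zero => simp
  | succ n ih =>
    rw [Finset.sum_range_succ, ih]
    have hy := iter_mem (β := β) hx n
    set y := (fbeta β)^[n] x with hydef
    have h0 : 0 ≤ β * y := mul_nonneg hβ0.le hy.1
    have hiter : (fbeta β)^[n+1] x = β * y - (⌊β * y⌋ : ℝ) := by
      rw [Function.iterate_succ_apply', ← hydef, fbeta, Int.fract]
    have hcast : ((bdigit β x n : ℕ) : ℝ) = (⌊β * y⌋ : ℝ) := by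
      rw [bdigit, ← hydef]
      exact_mod_cast congrArg (Int.cast : ℤ → ℝ) (Int.toNat_of_nonneg (Int.floor_nonneg.2 h0))
    rw [hiter, hcast]
    have hbk : (β:ℝ)^n ≠ 0 := by positivity
    have hb : (β:ℝ) ≠ 0 := ne_of_gt hβ0
    field_simp
    ring

lemma hasSum_bdigit {β x : ℝ} (hβ : 1 < β) (hx : x ∈ Set.Ico (0:ℝ) 1) :
    HasSum (fun k => (bdigit β x k : ℝ) / β ^ (k+1)) x := by
  have hβ0 : (0:ℝ) < β := lt_trans one_pos hβ
  have hs : Summable (fun k => (bdigit β x k : ℝ) / β ^ (k+1)) :=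
    summable_term hβ (bdigit_le hβ hx)
  have h1 : Filter.Tendsto (fun n => ∑ k ∈ Finset.range n, (bdigit β x k : ℝ) / β ^ (k+1))
      Filter.atTop (nhds (∑' k, (bdigit β x k : ℝ) / β ^ (k+1))) :=
    hs.hasSum.tendsto_sum_nat
  have h2 : Filter.Tendsto (fun n => ∑ k ∈ Finset.range n, (bdigit β x k : ℝ) / β ^ (k+1))
      Filter.atTop (nhds x) := by
    have heq : ∀ n, ∑ k ∈ Finset.range n, (bdigit β x k : ℝ) / β ^ (k+1)
        = x - (fbeta β)^[n] x / β ^ n := fun n => partial_eq hβ hx n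
    have htail : Filter.Tendsto (fun n => (fbeta β)^[n] x / β ^ n) Filter.atTop (nhds 0) := by
      apply squeeze_zero (fun n => div_nonneg (iter_mem hx n).1 (by positivity))
        (fun n => ?_) (tendsto_pow_atTop_nhds_zero_of_lt_one (by positivity)
          (inv_lt_one_of_one_lt₀ hβ))
      calc (fbeta β)^[n] x / β ^ n ≤ 1 / β ^ n :=
            div_le_div_of_nonneg_right (iter_mem hx n).2.le (by positivity)
        _ = (β⁻¹) ^ n := by rw [one_div, inv_pow]
    have : Filter.Tendsto (fun n => x - (fbeta β)^[n] x / β ^ n) Filter.atTop (nhds (x - 0)) :=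
      tendsto_const_nhds.sub htail
    rw [sub_zero] at this
    exact this.congr (fun n => (heq n).symm)
  have h3 := tendsto_nhds_unique h1 h2
  have h4 := hs.hasSum
  rw [h3] at h4
  exact h4

lemma piBeta_bdigit {β x : ℝ} (hβ : 1 < β) (hx : x ∈ Set.Ico (0:ℝ) 1) :
    piBeta β (bdigit β x) = x := (hasSum_bdigit hβ hx).tsum_eq

lemma shift_mem {β : ℝ} {d : ℕ → ℕ} (hd : d ∈ betaShift β) :
    (fun n => d (n+1)) ∈ betaShift β := by
  set s : (ℕ → ℕ) → (ℕ → ℕ) := fun d n => d (n+1) with hs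
  have hcont : Continuous s := continuous_pi fun n => continuous_apply (n+1)
  have hD : s '' {d | ∃ x ∈ Set.Ico (0:ℝ) 1, d = bdigit β x}
      ⊆ {d | ∃ x ∈ Set.Ico (0:ℝ) 1, d = bdigit β x} := by
    rintro _ ⟨_, ⟨x, hx, rfl⟩, rfl⟩
    refine ⟨fbeta β x, fbeta_mem β x, ?_⟩
    funext n
    simp only [hs, bdigit, Function.iterate_succ_apply]
  have : s d ∈ s '' betaShift β := Set.mem_image_of_mem s hd
  have h2 : s '' betaShift β ⊆ betaShift β := by
    calc s '' closure _ ⊆ closure (s '' _) := image_closure_subset_closure_image hcont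
    _ ⊆ closure _ := closure_mono hD
  exact h2 this

lemma shiftn_mem {β : ℝ} {d : ℕ → ℕ} (hd : d ∈ betaShift β) (m : ℕ) :
    (fun n => d (n+m)) ∈ betaShift β := by
  induction m with
  | zero => simpa using hd
  | succ m ih =>
    have h : (fun n => d (n+(m+1))) = (fun n => (fun k => d (k+m)) (n+1)) := by
      funext n; exact congrArg d (by omega)
    rw [h]; exact shift_mem ih


lemma wordIn_pre {β : ℝ} {d : ℕ → ℕ} (hd : d ∈ betaShift β) (k : ℕ) :
    wordIn β (pre d k) := by
  refine ⟨d, hd, 0, fun i hi => ?_⟩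
  rw [pre_length] at hi
  rw [zero_add, pre_getD d hi]

lemma mem_of_prefixes {β : ℝ} {e : ℕ → ℕ} (he : ∀ n, wordIn β (pre e n)) :
    e ∈ betaShift β := by
  have hg : ∀ n : ℕ, ∃ g ∈ betaShift β, ∀ i < n, g i = e i := by
    intro n
    obtain ⟨d, hd, m, hocc⟩ := he n
    refine ⟨fun k => d (k + m), shiftn_mem hd m, fun i hi => ?_⟩
    have := hocc i (by rw [pre_length]; exact hi)
    rw [pre_getD e hi] at this
    show d (i + m) = e i
    rw [show i + m = m + i by omega]; exact this
  choose g hgS hge using hg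
  have htend : Filter.Tendsto g Filter.atTop (nhds e) := by
    rw [tendsto_pi_nhds]
    intro i
    apply Filter.Tendsto.congr' _ (tendsto_const_nhds (x := e i))
    filter_upwards [Filter.eventually_ge_atTop (i+1)] with n hn
    exact (hge n i (by omega)).symm
  have : e ∈ closure (betaShift β) :=
    mem_closure_of_tendsto htend (Filter.Eventually.of_forall hgS)
  have hcl : IsClosed (betaShift β) := isClosed_closure
  rwa [hcl.closure_eq] at this

lemma piBeta_nonneg (β : ℝ) (hβ : 1 < β) (d : ℕ → ℕ) : 0 ≤ piBeta β d :=
  tsum_nonneg fun k => by positivity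

lemma tsum_bound {β : ℝ} (hβ : 1 < β) :
    ∑' k : ℕ, ((⌊β⌋₊ : ℝ)) / β ^ (k+1) = (⌊β⌋₊ : ℝ) / (β - 1) := by
  have hβ0 : (0:ℝ) < β := lt_trans one_pos hβ
  have h1 : ∀ k : ℕ, ((⌊β⌋₊ : ℝ)) / β ^ (k+1) = ((⌊β⌋₊ : ℝ) / β) * (β⁻¹) ^ k := by
    intro k
    rw [inv_pow, pow_succ]
    field_simp
  rw [tsum_congr h1, tsum_mul_left, tsum_geometric_of_lt_one (by positivity)
    (inv_lt_one_of_one_lt₀ hβ)]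
  have h2 : (1 - β⁻¹) ≠ 0 := by
    have : β⁻¹ < 1 := inv_lt_one_of_one_lt₀ hβ
    linarith
  have h3 : β - 1 ≠ 0 := by linarith
  have hb : (β:ℝ) ≠ 0 := by positivity
  field_simp

lemma piBeta_le_bound {β : ℝ} (hβ : 1 < β) {d : ℕ → ℕ} (hd : ∀ n, d n ≤ ⌊β⌋₊) :
    piBeta β d ≤ (⌊β⌋₊ : ℝ) / (β - 1) := by
  rw [← tsum_bound hβ]
  apply Summable.tsum_le_tsum _ (summable_term hβ hd)
    ((summable_term hβ (fun _ => le_refl ⌊β⌋₊)).congr (fun k => by norm_num))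
  intro k
  have : (d k : ℝ) ≤ (⌊β⌋₊ : ℝ) := by exact_mod_cast hd k
  exact div_le_div_of_nonneg_right this (by positivity)

lemma piBeta_split {β : ℝ} (hβ : 1 < β) {d : ℕ → ℕ} (hd : ∀ n, d n ≤ ⌊β⌋₊) (n : ℕ) :
    piBeta β d = (∑ k ∈ Finset.range n, (d k : ℝ) / β ^ (k+1))
      + (β ^ n)⁻¹ * piBeta β (fun k => d (k + n)) := by
  have hβ0 : (0:ℝ) < β := lt_trans one_pos hβ
  have hs : Summable (fun k => (d k : ℝ) / β ^ (k+1)) := summable_term hβ hd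
  have h1 := Summable.sum_add_tsum_nat_add n hs
  rw [piBeta, ← h1]
  congr 1
  have h2 : ∀ i : ℕ, (d (i + n) : ℝ) / β ^ (i + n + 1)
      = (β ^ n)⁻¹ * ((d (i + n) : ℝ) / β ^ (i + 1)) := by
    intro i
    rw [show i + n + 1 = (i + 1) + n by omega, pow_add]
    have hb1 : (β:ℝ) ^ (i+1) ≠ 0 := by positivity
    have hb2 : (β:ℝ) ^ n ≠ 0 := by positivity
    field_simp
  rw [tsum_congr h2, tsum_mul_left]
  rfl

lemma agree_exists {β : ℝ} {d : ℕ → ℕ} (hd : d ∈ betaShift β) (n : ℕ) :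
    ∃ x ∈ Set.Ico (0:ℝ) 1, ∀ i < n, bdigit β x i = d i := by
  have hU : IsOpen {f : ℕ → ℕ | ∀ i < n, f i = d i} := by
    have : {f : ℕ → ℕ | ∀ i < n, f i = d i}
        = ⋂ i ∈ Finset.range n, (fun f : ℕ → ℕ => f i) ⁻¹' {d i} := by
      ext f; simp [Finset.mem_range]
    rw [this]
    exact isOpen_biInter_finset fun i _ =>
      (isOpen_discrete _).preimage (continuous_apply i)
  have := mem_closure_iff.1 hd _ hU (fun i _ => rfl)
  obtain ⟨f, hf1, x, hx, rfl⟩ := this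
  exact ⟨x, hx, hf1⟩

lemma piBeta_le_one {β : ℝ} (hβ : 1 < β) {d : ℕ → ℕ} (hd : d ∈ betaShift β) :
    piBeta β d ≤ 1 := by
  have hβ0 : (0:ℝ) < β := lt_trans one_pos hβ
  have hbd : ∀ n, d n ≤ ⌊β⌋₊ := mem_le hβ hd
  have key : ∀ n : ℕ, piBeta β d ≤ 1 + (β ^ n)⁻¹ * ((⌊β⌋₊ : ℝ) / (β - 1)) := by
    intro n
    obtain ⟨x, hx, hagree⟩ := agree_exists hd n
    have hsplit := piBeta_split hβ hbd n
    have hsum : ∑ k ∈ Finset.range n, (d k : ℝ) / β ^ (k+1) ≤ 1 := by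
      have heq : ∑ k ∈ Finset.range n, (d k : ℝ) / β ^ (k+1)
          = ∑ k ∈ Finset.range n, (bdigit β x k : ℝ) / β ^ (k+1) := by
        apply Finset.sum_congr rfl
        intro k hk
        rw [hagree k (Finset.mem_range.1 hk)]
      rw [heq]
      have h1 : ∑ k ∈ Finset.range n, (bdigit β x k : ℝ) / β ^ (k+1) ≤ x :=
        sum_le_hasSum (Finset.range n) (fun k _ => by positivity) (hasSum_bdigit hβ hx)
      linarith [hx.2]
    have htail : piBeta β (fun k => d (k + n)) ≤ (⌊β⌋₊ : ℝ) / (β - 1) :=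
      piBeta_le_bound hβ (fun k => hbd (k + n))
    have hr : (0:ℝ) ≤ (β ^ n)⁻¹ := by positivity
    calc piBeta β d = _ := hsplit
      _ ≤ 1 + (β ^ n)⁻¹ * ((⌊β⌋₊ : ℝ) / (β - 1)) := by
          have := mul_le_mul_of_nonneg_left htail hr
          linarith
  have htend : Filter.Tendsto (fun n : ℕ => 1 + (β ^ n)⁻¹ * ((⌊β⌋₊ : ℝ) / (β - 1)))
      Filter.atTop (nhds (1 + 0 * ((⌊β⌋₊ : ℝ) / (β - 1)))) := by
    apply Filter.Tendsto.add tendsto_const_nhds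
    apply Filter.Tendsto.mul_const
    have := tendsto_pow_atTop_nhds_zero_of_lt_one (le_of_lt (by positivity : (0:ℝ) < β⁻¹))
      (inv_lt_one_of_one_lt₀ hβ)
    simpa [inv_pow] using this
  rw [show (1:ℝ) + 0 * ((⌊β⌋₊ : ℝ) / (β - 1)) = 1 by ring] at htend
  exact ge_of_tendsto htend (Filter.Eventually.of_forall key)


lemma shift_image_cylinder {β : ℝ} (hβ : 1 < β) {w : List ℕ}
    (hw1 : wordIn β w) (hext : ∀ v : List ℕ, wordIn β v → wordIn β (w ++ v))
    {v : List ℕ} (hv : wordIn β v) :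
    (fun d (k : ℕ) => d (k + w.length)) '' cylinder β (w ++ v) = cylinder β v := by
  set n := w.length with hn
  apply Set.Subset.antisymm
  · rintro _ ⟨d, ⟨hdS, hpref⟩, rfl⟩
    refine ⟨shiftn_mem hdS n, fun i hi => ?_⟩
    have hlen : i + n < (w ++ v).length := by
      rw [List.length_append]; omega
    have h1 := hpref (i + n) hlen
    rw [List.getD_append_right w v 0 (i+n) (by omega)] at h1
    simpa [show i + n - w.length = i by omega] using h1
  · intro d hd
    obtain ⟨hdS, hdpref⟩ := hd
    set e : ℕ → ℕ := fun i => if i < n then w.getD i 0 else d (i - n) with he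
    have heS : e ∈ betaShift β := by
      apply mem_of_prefixes
      intro k
      by_cases hk : k ≤ n
      · obtain ⟨dd, hddS, m, hocc⟩ := hw1
        refine ⟨dd, hddS, m, fun i hi => ?_⟩
        rw [pre_length] at hi
        rw [pre_getD e hi]
        have h1 := hocc i (by omega)
        rw [h1, he]
        simp only [if_pos (show i < n by omega)]
      · push_neg at hk
        have hpd : wordIn β (pre d (k - n)) := wordIn_pre hdS (k - n)
        obtain ⟨dd, hddS, m, hocc⟩ := hext _ hpd
        refine ⟨dd, hddS, m, fun i hi => ?_⟩
        rw [pre_length] at hi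
        rw [pre_getD e hi]
        have hlen : i < (w ++ pre d (k - n)).length := by
          rw [List.length_append, pre_length]; omega
        have h1 := hocc i hlen
        rw [h1, he]
        by_cases hin : i < n
        · rw [List.getD_append w _ 0 i (by omega)]
          simp only [if_pos hin]
        · rw [List.getD_append_right w _ 0 i (by omega)]
          rw [pre_getD d (by omega : i - n < k - n)]
          simp only [if_neg hin]
    refine ⟨e, ⟨heS, fun i hi => ?_⟩, ?_⟩
    · rw [List.length_append] at hi
      by_cases hin : i < n
      · rw [he]
        simp only [if_pos hin]
        rw [List.getD_append w v 0 i (by omega)]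
      · rw [he]
        simp only [if_neg hin]
        rw [List.getD_append_right w v 0 i (by omega)]
        exact hdpref (i - n) (by omega)
    · funext k
      rw [he]
      simp only [if_neg (show ¬ (k + n < n) by omega)]
      simp [show k + n - n = k by omega]

lemma image_eq {β : ℝ} (hβ : 1 < β) {w : List ℕ}
    (hw1 : wordIn β w) (hext : ∀ v : List ℕ, wordIn β v → wordIn β (w ++ v))
    {v : List ℕ} (hv : wordIn β v) :
    piBeta β '' cylinder β (w ++ v)
      = (fun y => (∑ k ∈ Finset.range w.length, (w.getD k 0 : ℝ) / β ^ (k+1))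
          + (β ^ w.length)⁻¹ * y) '' (piBeta β '' cylinder β v) := by
  set n := w.length with hn
  set c := ∑ k ∈ Finset.range n, (w.getD k 0 : ℝ) / β ^ (k+1) with hc
  have step1 : piBeta β '' cylinder β (w ++ v)
      = (fun d => c + (β ^ n)⁻¹ * piBeta β (fun k => d (k + n))) '' cylinder β (w ++ v) := by
    apply Set.image_congr
    intro d hd
    obtain ⟨hdS, hdpref⟩ := hd
    have hbd : ∀ m, d m ≤ ⌊β⌋₊ := mem_le hβ hdS
    have hsplit := piBeta_split hβ hbd n
    rw [hsplit]
    congr 1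
    rw [hc]
    apply Finset.sum_congr rfl
    intro k hk
    have hkn : k < n := Finset.mem_range.1 hk
    rw [hdpref k (by rw [List.length_append]; omega),
      List.getD_append w v 0 k (by omega)]
  rw [step1]
  have step2 : (fun d => c + (β ^ n)⁻¹ * piBeta β (fun k => d (k + n)))
      = (fun y => c + (β ^ n)⁻¹ * y) ∘ piBeta β ∘ (fun (d : ℕ → ℕ) (k : ℕ) => d (k + n)) := rfl
  rw [step2, Set.image_comp, Set.image_comp,
    shift_image_cylinder hβ hw1 hext hv]

lemma len_affine {c r : ℝ} (hr : 0 < r) (hr1 : r ≠ 1) (A : Set ℝ) :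
    len ((fun y => c + r * y) '' A) = r * len A := by
  have h1 : (fun y : ℝ => c + r * y) = fun y => AffineMap.homothety (c / (1 - r)) r y := by
    funext y
    rw [AffineMap.homothety_apply]
    have h2 : (1:ℝ) - r ≠ 0 := by
      intro h; apply hr1; linarith
    simp only [smul_eq_mul, vsub_eq_sub, vadd_eq_add]
    field_simp
    ring
  rw [len, h1]
  have := MeasureTheory.Measure.addHaar_image_homothety (volume : Measure ℝ)
    (c / (1 - r)) r A
  simp only [Module.finrank_self, pow_one] at this
  rw [show (AffineMap.homothety (c / (1 - r)) r : ℝ → ℝ) '' A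
    = (fun y => AffineMap.homothety (c / (1 - r)) r y) '' A from rfl] at this
  rw [this, ENNReal.toReal_mul, ENNReal.toReal_ofReal (abs_nonneg r),
    abs_of_pos hr]
  rfl

lemma cylinder_nil (β : ℝ) : _root_.cylinder β [] = betaShift β := by
  ext d; simp [_root_.cylinder]

lemma wordIn_nil {β : ℝ} (hβ : 1 < β) : wordIn β [] := by
  refine ⟨bdigit β 0, subset_closure ⟨0, by norm_num, rfl⟩, 0, fun i hi => ?_⟩
  simp at hi

lemma len_shift (β : ℝ) (hβ : 1 < β) : len (piBeta β '' betaShift β) = 1 := by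
  have h1 : Set.Ico (0:ℝ) 1 ⊆ piBeta β '' betaShift β := by
    intro x hx
    exact ⟨bdigit β x, subset_closure ⟨x, hx, rfl⟩, piBeta_bdigit hβ hx⟩
  have h2 : piBeta β '' betaShift β ⊆ Set.Icc (0:ℝ) 1 := by
    rintro _ ⟨d, hd, rfl⟩
    exact ⟨piBeta_nonneg β hβ d, piBeta_le_one hβ hd⟩
  have hv1 : volume (Set.Ico (0:ℝ) 1) ≤ volume (piBeta β '' betaShift β) := measure_mono h1
  have hv2 : volume (piBeta β '' betaShift β) ≤ volume (Set.Icc (0:ℝ) 1) := measure_mono h2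
  rw [Real.volume_Ico] at hv1
  rw [Real.volume_Icc] at hv2
  simp only [sub_zero, ENNReal.ofReal_one] at hv1 hv2
  have : volume (piBeta β '' betaShift β) = 1 := le_antisymm hv2 hv1
  rw [len, this, ENNReal.toReal_one]

end BetaAux
/-- scaling lemma: if `w ∈ S_β^*` can be followed by any word of
`S_β^*`, then `|π_β([w])| = β^{-|w|}`, and `|π_β([w v])| = β^{-|w|} |π_β([v])|` for all
`v ∈ S_β^*`. -/
theorem cylinder_scaling (β : ℝ) (hβ : 1 < β) (w : List ℕ) (hw : w ≠ [])
    (hw1 : wordIn β w) (hext : ∀ v : List ℕ, wordIn β v → wordIn β (w ++ v)) :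
    len (piBeta β '' cylinder β w) = (β ^ w.length)⁻¹ ∧
      ∀ v : List ℕ, wordIn β v →
        len (piBeta β '' cylinder β (w ++ v)) =
          (β ^ w.length)⁻¹ * len (piBeta β '' cylinder β v) := by
  have hβ0 : (0:ℝ) < β := lt_trans one_pos hβ
  have hn : 0 < w.length := List.length_pos_iff.2 hw
  have hrpos : (0:ℝ) < (β ^ w.length)⁻¹ := by positivity
  have hrne : (β ^ w.length)⁻¹ ≠ 1 := by
    have h1 : 1 < β ^ w.length := one_lt_pow₀ hβ (by omega)
    exact ne_of_lt (inv_lt_one_of_one_lt₀ h1)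
  have key : ∀ v : List ℕ, wordIn β v →
      len (piBeta β '' cylinder β (w ++ v))
        = (β ^ w.length)⁻¹ * len (piBeta β '' cylinder β v) := by
    intro v hv
    rw [BetaAux.image_eq hβ hw1 hext hv, BetaAux.len_affine hrpos hrne]
  refine ⟨?_, key⟩
  have h0 := key [] (BetaAux.wordIn_nil hβ)
  rw [List.append_nil] at h0
  rw [h0, BetaAux.cylinder_nil, BetaAux.len_shift β hβ, mul_one]
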